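/- Let k ≥ 1 and n ≥ 1 be integers and let a be an integer with a ≥ 2^{n−1}. Then a·c_k(n) can be written as the sum of at most ⌈a/(2^n − 1)⌉ binary k'th powers. -/

import Mathlib

/-- `ck k n = 1 + 2^n + 2^(2n) + ⋯ + 2^((k-1)n)`. -/
def ck (k n : ℕ) : ℕ := ∑ i ∈ Finset.range k, 2 ^ (i * n)

/-- `m` is a binary `k`'th power: `m = a * ck k n` for some `n ≥ 1` and `2^(n-1) ≤ a < 2^n`. -/
def IsBinaryKthPower (k m : ℕ) : Prop :=
  ∃ n a : ℕ, 1 ≤ n ∧ 2 ^ (n - 1) ≤ a ∧ a < 2 ^ n ∧ m = a * ck k n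

lemma split_aux (n : ℕ) (hn : 1 ≤ n) :
    ∀ a, 2 ^ (n - 1) ≤ a →
      ∃ l : Multiset ℕ, l.card ≤ (a + (2 ^ n - 1) - 1) / (2 ^ n - 1) ∧
        (∀ x ∈ l, 2 ^ (n - 1) ≤ x ∧ x < 2 ^ n) ∧ l.sum = a := by
  set M := 2 ^ n - 1 with hM
  have h2n : 2 ^ (n - 1) < 2 ^ n := Nat.pow_lt_pow_right (by norm_num) (Nat.sub_lt hn one_pos)
  have hM1 : 1 ≤ M := by
    have : 2 ≤ 2 ^ n := by
      calc 2 = 2 ^ 1 := (pow_one 2).symm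
      _ ≤ 2 ^ n := Nat.pow_le_pow_right (by norm_num) hn
    omega
  have hhalf : 2 ^ (n - 1) ≤ M := by omega
  intro a
  induction a using Nat.strong_induction_on with
  | _ a ih =>
    intro ha
    by_cases hle : a ≤ M
    · refine ⟨{a}, ?_, ?_, by simp⟩
      · have : 1 ≤ (a + M - 1) / M := by
          rw [Nat.le_div_iff_mul_le hM1]
          have : 1 ≤ a := le_trans (Nat.one_le_two_pow) ha
          omega
        simpa using this
      · intro x hx
        simp only [Multiset.mem_singleton] at hx
        subst hx
        exact ⟨ha, by omega⟩
    · push_neg at hle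
      by_cases hcase : 2 ^ (n - 1) ≤ a - M
      · obtain ⟨l, hc, hmem, hs⟩ := ih (a - M) (by omega) hcase
        refine ⟨M ::ₘ l, ?_, ?_, ?_⟩
        · rw [Multiset.card_cons]
          have heq : a + M - 1 = (a - M + M - 1) + M := by omega
          rw [heq, Nat.add_div_right _ hM1]
          omega
        · intro x hx
          rcases Multiset.mem_cons.mp hx with h | h
          · subst h; exact ⟨hhalf, by omega⟩
          · exact hmem x h
        · rw [Multiset.sum_cons, hs]; omega
      · push_neg at hcase
        -- a > M and a - M < 2^(n-1), so M < a < M + 2^(n-1); split into two parts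
        have ha2 : 2 ^ n ≤ a := by
          -- since a > M = 2^n - 1
          omega
        have hpow : 2 ^ n = 2 * 2 ^ (n - 1) := by
          conv_lhs => rw [← Nat.sub_add_cancel hn, pow_succ]
          ring
        refine ⟨{2 ^ (n - 1), a - 2 ^ (n - 1)}, ?_, ?_, ?_⟩
        · have : 2 ≤ (a + M - 1) / M := by
            rw [Nat.le_div_iff_mul_le hM1]
            omega
          simpa using this
        · intro x hx
          simp only [Multiset.insert_eq_cons, Multiset.mem_cons, Multiset.mem_singleton] at hx
          rcases hx with h | h <;> subst h
          · exact ⟨le_refl _, h2n⟩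
          · constructor <;> omega
        · simp only [Multiset.insert_eq_cons, Multiset.sum_cons, Multiset.sum_singleton]
          omega

/-- If `a ≥ 2^(n-1)` then `a * c_k(n)` is the sum of at most `⌈a / (2^n - 1)⌉` binary
`k`'th powers. (Here `(a + (2^n - 1) - 1) / (2^n - 1)` is the ceiling of `a/(2^n - 1)`.) -/
theorem mul_ck_sum_of_binary_kth_powers (k n a : ℕ) (hk : 1 ≤ k) (hn : 1 ≤ n)
    (ha : 2 ^ (n - 1) ≤ a) :
    ∃ l : Multiset ℕ, l.card ≤ (a + (2 ^ n - 1) - 1) / (2 ^ n - 1) ∧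
      (∀ x ∈ l, IsBinaryKthPower k x) ∧ l.sum = a * ck k n := by
  obtain ⟨l, hc, hmem, hs⟩ := split_aux n hn a ha
  refine ⟨l.map (fun x => x * ck k n), by simpa using hc, ?_, ?_⟩
  · intro x hx
    obtain ⟨y, hy, rfl⟩ := Multiset.mem_map.mp hx
    exact ⟨n, y, hn, (hmem y hy).1, (hmem y hy).2, rfl⟩
  · rw [Multiset.sum_map_mul_right]
    simp [hs]
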